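/- Let A be a Noetherian Cohen–Macaulay commutative ring, I an ideal of A of height one, and φ : I → A an injective A-module homomorphism whose image is the ideal J ⊆ A. Assume that whenever I ⊆ (a) for some a ∈ A, the element a is a unit of A. Then J has height one in A. -/

import Mathlib

open Pointwise

/-- The height (codimension) of an ideal: the minimum of the heights of the
prime ideals containing it, the height of a prime being its height as an
element of the prime spectrum ordered by inclusion. -/
noncomputable def idealHeight {A : Type*} [CommRing A] (I : Ideal A) : ℕ∞ :=
  ⨅ (P : PrimeSpectrum A) (_ : I ≤ P.asIdeal), Order.height P

/-- The grade of an ideal `I`: the maximal length of an `A`-regular sequence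
contained in `I`. -/
noncomputable def idealGrade (A : Type*) [CommRing A] (I : Ideal A) : ℕ∞ :=
  sSup {n : ℕ∞ | ∃ rs : List A, (∀ x ∈ rs, x ∈ I) ∧
    RingTheory.Sequence.IsRegular A rs ∧ (rs.length : ℕ∞) = n}

/-- A (Noetherian) ring is Cohen–Macaulay if the grade of every proper ideal
equals its height. -/
def IsCohenMacaulayRing (A : Type*) [CommRing A] : Prop :=
  ∀ I : Ideal A, I ≠ ⊤ → idealGrade A I = idealHeight I

lemma aux_smul_top_eq_span {A : Type*} [CommRing A] (r : A) :
    r • (⊤ : Submodule A A) = (Ideal.span {r} : Ideal A) := by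
  rw [← Submodule.ideal_span_singleton_smul, Ideal.smul_eq_mul, Ideal.mul_top]

lemma aux_exists_mem_of_le_sSup {S : Set ℕ∞} {n : ℕ}
    (h : (n : ℕ∞) + 1 ≤ sSup S) : ∃ m ∈ S, (n : ℕ∞) + 1 ≤ m := by
  have hlt : (n : ℕ∞) < sSup S := (ENat.add_one_le_iff (by simp)).mp h
  obtain ⟨m, hm, hlt'⟩ := lt_sSup_iff.mp hlt
  exact ⟨m, hm, (ENat.add_one_le_iff (by simp)).mpr hlt'⟩

lemma aux_height_top {A : Type*} [CommRing A] : idealHeight (⊤ : Ideal A) = ⊤ := by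
  rw [idealHeight, iInf_eq_top]
  intro P
  rw [iInf_eq_top]
  intro h
  exact absurd (top_le_iff.mp h) P.2.ne_top

theorem stmt_0 {A : Type*} [CommRing A] [IsNoetherianRing A]
    (hCM : IsCohenMacaulayRing A) (I J : Ideal A)
    (φ : I →ₗ[A] A) (hinj : Function.Injective φ)
    (hrange : LinearMap.range φ = J)
    (hI : idealHeight I = 1)
    (hprin : ∀ a : A, I ≤ Ideal.span {a} → IsUnit a) :
    idealHeight J = 1 := by
  classical
  have hItop : I ≠ ⊤ := by
    rintro rfl
    rw [aux_height_top] at hI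
    simp at hI
  -- commuting relation
  have key : ∀ z w : I, (z : A) * φ w = (w : A) * φ z := by
    intro z w
    have h1 : (z : A) • w = (w : A) • z := by
      ext
      simp [mul_comm]
    calc (z : A) * φ w = φ ((z : A) • w) := by rw [map_smul, smul_eq_mul]
      _ = φ ((w : A) • z) := by rw [h1]
      _ = (w : A) * φ z := by rw [map_smul, smul_eq_mul]
  -- a regular element x ∈ I
  have hgradeI : idealGrade A I = 1 := by rw [hCM I hItop, hI]
  obtain ⟨m, hm, hm1⟩ : ∃ m ∈ {n : ℕ∞ | ∃ rs : List A, (∀ x ∈ rs, x ∈ I) ∧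
      RingTheory.Sequence.IsRegular A rs ∧ (rs.length : ℕ∞) = n}, (0 : ℕ∞) + 1 ≤ m := by
    apply aux_exists_mem_of_le_sSup (n := 0)
    rw [← idealGrade, hgradeI]
    simp
  obtain ⟨rs, hrsI, hreg, hlen⟩ := hm
  have hlen1 : 1 ≤ rs.length := by
    rw [← hlen] at hm1
    exact_mod_cast (by simpa using hm1)
  obtain ⟨x, rest, rfl⟩ : ∃ x rest, rs = x :: rest := by
    cases rs with
    | nil => simp at hlen1
    | cons a l => exact ⟨a, l, rfl⟩
  rw [RingTheory.Sequence.isRegular_cons_iff] at hreg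
  have hxreg : IsSMulRegular A x := hreg.1
  have hxI : x ∈ I := hrsI x (by simp)
  set c : A := φ ⟨x, hxI⟩ with hc
  have hcJ : c ∈ J := by rw [← hrange]; exact ⟨⟨x, hxI⟩, rfl⟩
  have hcreg : IsSMulRegular A c := by
    intro a b hab
    have hab' : (a : A) • φ (⟨x, hxI⟩ : I) = (b : A) • φ ⟨x, hxI⟩ := by
      simpa [smul_eq_mul, mul_comm] using hab
    rw [← map_smul, ← map_smul] at hab'
    have h2 := congrArg (Subtype.val) (hinj hab')
    simp only [Submodule.coe_smul, smul_eq_mul] at h2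
    refine hxreg ?_
    show x • a = x • b
    rw [smul_eq_mul, smul_eq_mul, mul_comm x a, mul_comm x b]
    exact h2
  -- J is proper
  have hJtop : J ≠ ⊤ := by
    intro hJT
    have h1 : (1 : A) ∈ LinearMap.range φ := by rw [hrange, hJT]; trivial
    obtain ⟨y, hy1⟩ := h1
    have hIy : I ≤ Ideal.span {(y : A)} := by
      intro w hw
      rw [Ideal.mem_span_singleton]
      refine ⟨φ ⟨w, hw⟩, ?_⟩
      have hk := key y ⟨w, hw⟩
      rw [hy1, mul_one] at hk
      exact hk.symm
    exact hItop (Ideal.eq_top_of_isUnit_mem I y.2 (hprin _ hIy))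
  have hgJ : idealGrade A J = idealHeight J := hCM J hJtop
  -- 1 ≤ grade J
  have h1leJ : 1 ≤ idealGrade A J := by
    apply le_sSup
    refine ⟨[c], ?_, ?_, by simp⟩
    · intro z hz
      simp only [List.mem_singleton] at hz
      exact hz ▸ hcJ
    · refine RingTheory.Sequence.IsRegular.cons hcreg ?_
      have hlt : (c • (⊤ : Submodule A A)) < ⊤ := by
        rw [aux_smul_top_eq_span, lt_top_iff_ne_top]
        intro h
        exact hJtop (top_le_iff.mp (h ▸ Ideal.span_le.mpr (by simpa using hcJ)))
      have := (Submodule.Quotient.nontrivial_iff (p := c • (⊤ : Submodule A A))).mpr hlt.ne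
      exact RingTheory.Sequence.IsRegular.nil A (QuotSMulTop c A)
  by_cases hle : idealGrade A J ≤ 1
  · rw [← hgJ]
    exact le_antisymm hle h1leJ
  -- grade J ≥ 2: derive J = I
  have h2 : (1 : ℕ∞) + 1 ≤ idealGrade A J := by
    rw [not_le] at hle
    exact (ENat.add_one_le_iff (by simp)).mpr hle
  obtain ⟨m, hm, hm2⟩ := aux_exists_mem_of_le_sSup (n := 1) (h2.trans_eq (by rw [idealGrade]))
  obtain ⟨rs, hrsJ, hreg2, hlen2⟩ := hm
  have hlen2' : 2 ≤ rs.length := by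
    have h := hm2
    rw [← hlen2] at h
    norm_cast at h
  obtain ⟨u, v, tail, rfl⟩ : ∃ u v tail, rs = u :: v :: tail := by
    match rs, hlen2' with
    | a :: b :: l, _ => exact ⟨a, b, l, rfl⟩
  rw [RingTheory.Sequence.isRegular_cons_iff] at hreg2
  have hureg : IsSMulRegular A u := hreg2.1
  have hvreg : IsSMulRegular (QuotSMulTop u A) v := by
    have := hreg2.2
    rw [RingTheory.Sequence.isRegular_cons_iff] at this
    exact this.1
  obtain ⟨s, hsu⟩ : ∃ s : I, φ s = u := by
    have : u ∈ LinearMap.range φ := by rw [hrange]; exact hrsJ u (by simp)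
    exact this
  obtain ⟨t, htv⟩ : ∃ t : I, φ t = v := by
    have : v ∈ LinearMap.range φ := by rw [hrange]; exact hrsJ v (by simp)
    exact this
  have heq : v * (s : A) = u * (t : A) := by
    have hk := key t s
    rw [hsu, htv] at hk
    rw [mul_comm v (s : A), mul_comm u (t : A)]
    exact hk.symm
  -- s = u * s'
  obtain ⟨s', hs'⟩ : ∃ s', (s : A) = u * s' := by
    have h0 : Submodule.Quotient.mk (p := u • (⊤ : Submodule A A)) (s : A) = 0 := by
      apply hvreg
      show v • Submodule.Quotient.mk (s : A) = v • (0 : QuotSMulTop u A)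
      rw [smul_zero, ← Submodule.Quotient.mk_smul, smul_eq_mul, heq,
        Submodule.Quotient.mk_eq_zero, aux_smul_top_eq_span, Ideal.mem_span_singleton]
      exact ⟨(t : A), rfl⟩
    rw [Submodule.Quotient.mk_eq_zero, aux_smul_top_eq_span,
      Ideal.mem_span_singleton] at h0
    exact h0
  -- every w ∈ I satisfies w = s' * φ w
  have hws' : ∀ w : I, (w : A) = s' * φ w := by
    intro w
    have hk := key s w
    rw [hsu, hs'] at hk
    have : u • (s' * φ w) = u • (w : A) := by
      rw [smul_eq_mul, smul_eq_mul, ← mul_assoc, hk, mul_comm]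
    exact (hureg this).symm
  have hunit : IsUnit s' := by
    apply hprin
    intro w hw
    rw [Ideal.mem_span_singleton]
    exact ⟨φ ⟨w, hw⟩, hws' ⟨w, hw⟩⟩
  obtain ⟨su, rfl⟩ := hunit
  have hJI : J = I := by
    apply le_antisymm
    · rw [← hrange]
      rintro _ ⟨w, rfl⟩
      have := hws' w
      have : φ w = (↑su⁻¹ : A) * (w : A) := by
        rw [this]
        rw [← mul_assoc, Units.inv_mul, one_mul]
      rw [this]
      exact Ideal.mul_mem_left _ _ w.2
    · intro w hw
      rw [show w = (↑su : A) * φ ⟨w, hw⟩ from hws' ⟨w, hw⟩]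
      refine Ideal.mul_mem_left _ _ ?_
      rw [← hrange]
      exact ⟨⟨w, hw⟩, rfl⟩
  rw [hJI]
  exact hI
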